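/- Let X be a real Hilbert space, let m ≥ 2, and for each i ∈ {1,…,m} let T_i : X → X be firmly nonexpansive and asymptotically regular, i.e., 0 ∈ closure (Set.range (fun x => x − T_i x)). Then the composition T_m T_{m−1} ⋯ T_1 is asymptotically regular, i.e., 0 ∈ closure (Set.range (fun x => x − (T_m T_{m−1} ⋯ T_1) x)). -/

import Mathlib

set_option maxHeartbeats 1000000
set_option synthInstance.maxHeartbeats 400000

open RealInnerProductSpace

lemma sq_le_imp {a b : ℝ} (ha : 0 ≤ a) (hb : 0 ≤ b) (h : a^2 ≤ b^2) : a ≤ b := by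
  by_contra hc
  push_neg at hc
  nlinarith

lemma nonexp_of_firm {H : Type*} [NormedAddCommGroup H] [InnerProductSpace ℝ H]
    {T : H → H} (hT : ∀ u v : H, ‖T u - T v‖ ^ 2 ≤ ⟪u - v, T u - T v⟫) (u v : H) :
    ‖T u - T v‖ ≤ ‖u - v‖ := by
  rcases eq_or_lt_of_le (norm_nonneg (T u - T v)) with h0 | h0
  · rw [← h0]; exact norm_nonneg _
  · have h1 := hT u v
    have h2 := real_inner_le_norm (u - v) (T u - T v)
    nlinarith

lemma lemA {H : Type*} [NormedAddCommGroup H] [InnerProductSpace ℝ H] [CompleteSpace H]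
    (T : H → H) (hT : ∀ u v : H, ‖T u - T v‖ ^ 2 ≤ ⟪u - v, T u - T v⟫)
    (R : H ≃ₗᵢ[ℝ] H) (har : ∀ δ : ℝ, 0 < δ → ∃ a : H, ‖a - T a‖ ≤ δ)
    (ε : ℝ) (hε : 0 < ε) : ∃ u : H, ‖u - T (R u)‖ ≤ ε := by
  have hne := nonexp_of_firm hT
  obtain ⟨d, hd⟩ : ∃ t : ℝ, t = ε/10 := ⟨_, rfl⟩
  have hd0 : 0 < d := by rw [hd]; positivity
  obtain ⟨a, ha⟩ := har d hd0
  obtain ⟨A, hA⟩ : ∃ t : ℝ, t = ‖a‖ := ⟨_, rfl⟩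
  have hA0 : 0 ≤ A := hA ▸ norm_nonneg a
  obtain ⟨C, hC⟩ : ∃ t : ℝ, t = 3*A^2 + 7*d*A := ⟨_, rfl⟩
  have hC0 : 0 ≤ C := by rw [hC]; positivity
  obtain ⟨l, hl⟩ : ∃ t : ℝ, t = min (1/4) (ε^2/(2*(C+1))) := ⟨_, rfl⟩
  have hl0 : 0 < l := by
    rw [hl]
    refine lt_min (by norm_num) (by positivity)
  have hl4 : l ≤ 1/4 := by rw [hl]; exact min_le_left _ _
  have hlmin : l ≤ ε^2/(2*(C+1)) := by rw [hl]; exact min_le_right _ _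
  have hK : (0:ℝ) ≤ 1 - l := by linarith
  obtain ⟨x, hx, -⟩ :
      ∃ x : H, Function.IsFixedPt (fun y => T (R ((1 - l) • y))) x ∧
        Filter.Tendsto (fun n => (fun y => T (R ((1 - l) • y)))^[n] 0) Filter.atTop (nhds x) := by
    have hlip : ∀ y y' : H,
        dist (T (R ((1-l)•y))) (T (R ((1-l)•y'))) ≤ (1 - l) * dist y y' := by
      intro y y'
      calc dist (T (R ((1-l)•y))) (T (R ((1-l)•y'))) = ‖T (R ((1-l)•y)) - T (R ((1-l)•y'))‖ := by
            rw [dist_eq_norm]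
      _ ≤ ‖R ((1-l)•y) - R ((1-l)•y')‖ := hne _ _
      _ = ‖(1-l)•y - (1-l)•y'‖ := by rw [← map_sub, R.norm_map]
      _ = (1-l) * ‖y - y'‖ := by rw [← smul_sub, norm_smul, Real.norm_eq_abs, abs_of_nonneg hK]
      _ = (1-l) * dist y y' := by rw [dist_eq_norm]
    have hcon : ContractingWith ⟨1 - l, hK⟩ (fun y => T (R ((1 - l) • y))) := by
      constructor
      · apply NNReal.coe_lt_coe.mp
        show 1 - l < 1
        linarith
      · exact LipschitzWith.of_dist_le_mul hlip
    obtain ⟨x, h1, h2, -⟩ := hcon.exists_fixedPoint 0 (edist_ne_top _ _)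
    exact ⟨x, h1, h2⟩
  have hfix : T (R ((1 - l) • x)) = x := hx
  obtain ⟨N, hN⟩ : ∃ t : ℝ, t = ‖x‖ := ⟨_, rfl⟩
  have hN0 : 0 ≤ N := hN ▸ norm_nonneg x
  obtain ⟨P, hP⟩ : ∃ t : ℝ, t = ‖(x - a) - R (x - a)‖ := ⟨_, rfl⟩
  have hP0 : 0 ≤ P := hP ▸ norm_nonneg _
  obtain ⟨Q, hQ⟩ : ∃ t : ℝ, t = ‖x - R x‖ := ⟨_, rfl⟩
  have hQ0 : 0 ≤ Q := hQ ▸ norm_nonneg _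
  obtain ⟨E, hE⟩ : ∃ t : ℝ, t = ‖x - a‖ := ⟨_, rfl⟩
  have hE0 : 0 ≤ E := hE ▸ norm_nonneg _
  have hv2 : x - T a = (x - a) + (a - T a) := by abel
  have hsub : R ((1-l)•x) - a = R (x-a) - (a - R a) - l • R x := by
    rw [map_smul, map_sub, sub_smul, one_smul]
    abel
  have hexp : E^2 + 2*⟪x - a, a - T a⟫ + ‖a - T a‖^2 ≤
      ⟪R (x-a), x-a⟫ + ⟪R (x-a), a - T a⟫ - ⟪a - R a, x - a⟫ - ⟪a - R a, a - T a⟫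
        - l*⟪R x, x⟫ + l*⟪R x, a⟫ - l*⟪R x, a - T a⟫ := by
    have h := hT (R ((1-l)•x)) a
    rw [hfix, hsub, hv2] at h
    rw [norm_add_sq_real] at h
    simp only [inner_sub_left, inner_sub_right, inner_add_left, inner_add_right,
      real_inner_smul_left] at h
    rw [hE]
    simp only [inner_sub_left, inner_sub_right, inner_add_left, inner_add_right]
    linarith only [h]
  have hf1 : ⟪R (x-a), x-a⟫ = E^2 - P^2/2 := by
    have h1 := norm_sub_sq_real (x-a) (R (x-a))
    have h2 : ‖R (x-a)‖^2 = ‖x-a‖^2 := by rw [R.norm_map]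
    rw [real_inner_comm, hE, hP]
    linarith only [h1, h2]
  have hf3 : ⟪R x, x⟫ = N^2 - Q^2/2 := by
    have h1 := norm_sub_sq_real x (R x)
    have h2 : ‖R x‖^2 = ‖x‖^2 := by rw [R.norm_map]
    rw [real_inner_comm, hN, hQ]
    linarith only [h1, h2]
  have hf2 : -(A * P) ≤ ⟪a - R a, x - a⟫ := by
    have h1 : ⟪R a, x - a⟫ = ⟪a, R.symm (x-a)⟫ := by
      conv_lhs => rw [show x - a = R (R.symm (x-a)) by rw [R.apply_symm_apply]]
      exact R.inner_map_map a (R.symm (x-a))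
    have h2 : ⟪a - R a, x - a⟫ = ⟪a, (x - a) - R.symm (x-a)⟫ := by
      rw [inner_sub_left, h1, ← inner_sub_right]
    have h3 : ‖(x - a) - R.symm (x-a)‖ = P := by
      rw [hP, ← R.norm_map ((x-a) - R.symm (x-a)), map_sub, R.apply_symm_apply, norm_sub_rev]
    have h4 := abs_real_inner_le_norm a ((x - a) - R.symm (x-a))
    rw [h3] at h4
    rw [h2, hA]
    linarith only [neg_abs_le (⟪a, (x - a) - R.symm (x-a)⟫), h4]
  have hf4 : ⟪R x, a⟫ ≤ N * A := by
    have h1 := real_inner_le_norm (R x) a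
    rw [R.norm_map] at h1
    rw [hN, hA]
    linarith only [h1]
  have hf5 : Q ≤ P + 2*A := by
    have h1 : x - R x = ((x-a) - R (x-a)) + (a - R a) := by rw [map_sub]; abel
    have h2 : ‖a - R a‖ ≤ ‖a‖ + ‖R a‖ := norm_sub_le _ _
    rw [R.norm_map] at h2
    rw [hQ, hP, hA, h1]
    calc ‖((x-a) - R (x-a)) + (a - R a)‖ ≤ ‖(x-a) - R (x-a)‖ + ‖a - R a‖ := norm_add_le _ _
    _ ≤ ‖x - a - R (x-a)‖ + 2*‖a‖ := by linarith only [h2]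
  have hbnd : ∀ u : H, |⟪u, a - T a⟫| ≤ ‖u‖ * d := by
    intro u
    calc |⟪u, a - T a⟫| ≤ ‖u‖ * ‖a - T a‖ := abs_real_inner_le_norm _ _
    _ ≤ ‖u‖ * d := mul_le_mul_of_nonneg_left ha (norm_nonneg u)
  have hb1 := abs_le.mp (hbnd (x - a))
  have hb2 := abs_le.mp (hbnd (R (x-a)))
  have hb3 := abs_le.mp (hbnd (a - R a))
  have hb4 := abs_le.mp (hbnd (R x))
  rw [(R.norm_map (x-a) : ‖R (x-a)‖ = ‖x - a‖), ← hE] at hb2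
  rw [(R.norm_map x : ‖R x‖ = ‖x‖), ← hN] at hb4
  rw [← hE] at hb1
  have hbb3 : ‖a - R a‖ ≤ 2*A := by
    have h2 : ‖a - R a‖ ≤ ‖a‖ + ‖R a‖ := norm_sub_le _ _
    rw [R.norm_map] at h2
    rw [hA]
    linarith only [h2]
  have hprod := mul_le_mul_of_nonneg_right hbb3 hd0.le
  have hb3u : ⟪a - R a, a - T a⟫ ≤ 2*A*d := by linarith only [hb3.2, hprod]
  have hb3l : -(2*A*d) ≤ ⟪a - R a, a - T a⟫ := by
    linarith only [hb3.1, hprod]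
  have m1 : l * ⟪R x, x⟫ = l*(N^2) - l*(Q^2)/2 := by rw [hf3]; ring
  have m2 : l * ⟪R x, a⟫ ≤ l*(N*A) := mul_le_mul_of_nonneg_left hf4 hl0.le
  have m3 : -(l * ⟪R x, a - T a⟫) ≤ l*(N*d) := by
    linarith only [mul_le_mul_of_nonneg_left hb4.1 hl0.le]
  have q2 : Q^2 ≤ 2*P^2 + 8*A^2 := by
    have hq := mul_self_le_mul_self hQ0 hf5
    linarith only [hq, sq_nonneg (P - 2*A)]
  have m4 : l * (Q^2) ≤ 2*(l*(P^2)) + 8*(l*(A^2)) := by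
    linarith only [mul_le_mul_of_nonneg_left q2 hl0.le]
  have m5 : l*(P^2) ≤ P^2/4 := by linarith only [mul_le_mul_of_nonneg_right hl4 (sq_nonneg P)]
  have m6 : A*P ≤ P^2/4 + A^2 := by linarith only [sq_nonneg (P - 2*A)]
  have m7 : l*(N*A) ≤ l*(N^2)/4 + l*(A^2) := by
    have h0 : N*A ≤ N^2/4 + A^2 := by linarith only [sq_nonneg (N - 2*A)]
    linarith only [mul_le_mul_of_nonneg_left h0 hl0.le]
  have m8 : l*(N*d) ≤ (N*d)/4 := by
    linarith only [mul_le_mul_of_nonneg_right hl4 (mul_nonneg hN0 hd0.le)]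
  have m9 : l*(A^2) ≤ A^2/4 := by linarith only [mul_le_mul_of_nonneg_right hl4 (sq_nonneg A)]
  have m10 : E*d ≤ N*d + A*d := by
    have h0 : ‖x - a‖ ≤ ‖x‖ + ‖a‖ := norm_sub_le x a
    rw [← hE, ← hN, ← hA] at h0
    linarith only [mul_le_mul_of_nonneg_right h0 hd0.le]
  have hNd0 : 0 ≤ N*d := mul_nonneg hN0 hd0.le
  have hAd0 : 0 ≤ A*d := mul_nonneg hA0 hd0.le
  have hM : l*(N^2) ≤ 3*A^2 + 5*(N*d) + 7*(A*d) := by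
    linarith only [hexp, hf1, hf2, hb1.1, hb1.2, hb2.2, hb3l, hb3u, m1, m2, m3, m4, m5, m6,
      m7, m8, m9, m10, sq_nonneg ‖a - T a‖, hNd0, hAd0]
  have hD : (l*N)^2 ≤ 5*d*(l*N) + l*C := by
    have h0 := mul_le_mul_of_nonneg_left hM hl0.le
    rw [hC]
    linarith only [h0]
  have hlC : l*C ≤ ε^2/2 := by
    have h2 : l*C ≤ ε^2/(2*(C+1)) * C := mul_le_mul_of_nonneg_right hlmin hC0
    have h3 : ε^2/(2*(C+1)) * C ≤ ε^2/2 := by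
      rw [div_mul_eq_mul_div, div_le_div_iff₀ (by positivity) (by norm_num)]
      linarith only [sq_nonneg ε]
    linarith only [h2, h3]
  have hDe : l*N ≤ ε := by
    rw [hd] at hD
    by_contra hcc
    push_neg at hcc
    have hp := mul_pos (show (0:ℝ) < 2*(l*N)+ε by linarith only [hcc, hε]) (sub_pos.mpr hcc)
    linarith only [hD, hlC, hp]
  refine ⟨(1-l)•x, ?_⟩
  have hzz : (1-l)•x - T (R ((1-l)•x)) = -(l • x) := by
    rw [hfix, sub_smul, one_smul]; abel
  rw [hzz, norm_neg, norm_smul, Real.norm_eq_abs, abs_of_nonneg hl0.le, ← hN]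
  exact hDe

open Fin.NatCast

/-- Composition `T (m-1) ∘ ⋯ ∘ T 1 ∘ T 0` applied to `x` (apply `T 0` first),
so that with `T i` playing the role of `T_{i+1}` this is `T_m T_{m-1} ⋯ T_1 x`. -/
def compSeq {X : Type*} (m : ℕ) (T : Fin m → X → X) : X → X :=
  fun x => (List.ofFn T).foldl (fun y f => f y) x

theorem stmt_3 {X : Type*} [NormedAddCommGroup X] [InnerProductSpace ℝ X] [CompleteSpace X]
    (m : ℕ) (hm : 2 ≤ m) (T : Fin m → X → X)
    (hT : ∀ i, ∀ x y : X, ‖T i x - T i y‖ ^ 2 ≤ (inner ℝ (x - y) (T i x - T i y) : ℝ))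
    (hreg : ∀ i, (0 : X) ∈ closure (Set.range (fun x => x - T i x))) :
    (0 : X) ∈ closure (Set.range (fun x => x - compSeq m T x)) := by
  haveI : NeZero m := ⟨by omega⟩
  -- the product space
  let H : Type _ := PiLp 2 (fun _ : Fin m => X)
  haveI : CompleteSpace H := inferInstance
  let T' : H → H := fun u => WithLp.toLp 2 (fun i => T i (u i))
  have hT' : ∀ u v : H, ‖T' u - T' v‖ ^ 2 ≤ ⟪u - v, T' u - T' v⟫ := by
    intro u v
    rw [PiLp.norm_sq_eq_of_L2, PiLp.inner_apply]
    refine Finset.sum_le_sum fun i _ => ?_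
    exact hT i (u i) (v i)
  let σ : Fin m ≃ Fin m := Equiv.addRight 1
  let R : H ≃ₗᵢ[ℝ] H := LinearIsometryEquiv.piLpCongrLeft 2 ℝ X σ
  have hR : ∀ (u : H) (i : Fin m), R u i = u (i - 1) := by
    intro u i
    rw [LinearIsometryEquiv.piLpCongrLeft_apply, Equiv.piCongrLeft'_apply]
    simp [σ, sub_eq_add_neg]
  have har : ∀ δ : ℝ, 0 < δ → ∃ a : H, ‖a - T' a‖ ≤ δ := by
    intro δ hδ
    have hpick : ∀ i : Fin m, ∃ x : X, ‖x - T i x‖ < δ/m := by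
      intro i
      have h := hreg i
      rw [Metric.mem_closure_iff] at h
      obtain ⟨b, ⟨x, hx⟩, hb⟩ := h (δ/m) (by positivity)
      refine ⟨x, ?_⟩
      rw [dist_zero_left] at hb
      rw [← hx] at hb
      exact hb
    choose a0 haa using hpick
    let a : H := WithLp.toLp 2 a0
    refine ⟨a, ?_⟩
    have h2 : ‖a - T' a‖^2 ≤ δ^2 := by
      rw [PiLp.norm_sq_eq_of_L2]
      have hle : ∀ i : Fin m, ‖(a - T' a) i‖^2 ≤ (δ/m)^2 := by
        intro i
        have h1 : (a - T' a) i = a0 i - T i (a0 i) := rfl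
        rw [h1]
        have := (haa i).le
        nlinarith [norm_nonneg (a0 i - T i (a0 i))]
      calc ∑ i, ‖(a - T' a) i‖^2 ≤ ∑ _i : Fin m, (δ/m)^2 :=
            Finset.sum_le_sum fun i _ => hle i
      _ = m * (δ/m)^2 := by rw [Finset.sum_const, Finset.card_univ, Fintype.card_fin]; ring
      _ ≤ δ^2 := by
          have hm1 : (1:ℝ) ≤ (m:ℝ) := by exact_mod_cast Nat.one_le_iff_ne_zero.mpr (by omega)
          have hmpos : (0:ℝ) < (m:ℝ) := by linarith
          have key : (m:ℝ) * (δ/m)^2 = δ^2/m := by field_simp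
          rw [key]
          exact div_le_self (sq_nonneg δ) hm1
    exact sq_le_imp (norm_nonneg _) hδ.le h2
  -- apply the core lemma and transfer back
  rw [Metric.mem_closure_iff]
  intro ε hε
  obtain ⟨εp, hεp⟩ : ∃ t : ℝ, t = ε/(2*(m+1)) := ⟨_, rfl⟩
  have hεp0 : 0 < εp := by rw [hεp]; positivity
  obtain ⟨u, hu⟩ := lemA T' hT' R har εp hεp0
  have hcoord : ∀ i : Fin m, ‖u i - T i (u (i-1))‖ ≤ εp := by
    intro i
    have h1 : (u - T' (R u)) i = u i - T i (u (i - 1)) := by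
      have ht : T' (R u) i = T i (R u i) := rfl
      calc (u - T' (R u)) i = u i - T' (R u) i := rfl
      _ = u i - T i (u (i-1)) := by rw [ht, hR]
    have h2 : ‖u i - T i (u (i-1))‖^2 ≤ ‖u - T' (R u)‖^2 := by
      rw [PiLp.norm_sq_eq_of_L2, ← h1]
      exact Finset.single_le_sum (fun j _ => sq_nonneg ‖(u - T' (R u)) j‖) (Finset.mem_univ i)
    exact le_trans (sq_le_imp (norm_nonneg _) (norm_nonneg _) h2) hu
  have hnei : ∀ (i : Fin m) (p q : X), ‖T i p - T i q‖ ≤ ‖p - q‖ := fun i => nonexp_of_firm (hT i)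
  let xb : X := u (0 - 1)
  have hlen : (List.ofFn T).length = m := List.length_ofFn
  have htake : ∀ (n : ℕ) (hnm : n < m),
      (List.ofFn T).take (n+1) = (List.ofFn T).take n ++ [T ⟨n, hnm⟩] := by
    intro n hnm
    rw [List.take_succ]
    congr
    rw [List.getElem?_eq_getElem (by rw [hlen]; exact hnm)]
    simp [List.getElem_ofFn]
  have chain : ∀ k : ℕ, 1 ≤ k → k ≤ m →
      ‖((List.ofFn T).take k).foldl (fun y f => f y) xb - u ((k-1 : ℕ) : Fin m)‖ ≤ k * εp := by
    intro k
    induction k with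
    | zero => omega
    | succ n ih =>
      intro _ hkm
      have hnm : n < m := by omega
      rw [htake n hnm, List.foldl_append]
      simp only [List.foldl_cons, List.foldl_nil]
      have hni : ((n + 1 - 1 : ℕ) : Fin m) = ((n : ℕ) : Fin m) := by congr 1
      rw [hni]
      rcases Nat.eq_zero_or_pos n with rfl | hn
      · -- base case k = 1
        have h0 : ((0:ℕ) : Fin m) = (⟨0, hnm⟩ : Fin m) := rfl
        rw [h0]
        simp only [List.take_zero, List.foldl_nil]
        have hc := hcoord ⟨0, hnm⟩
        have hxb : xb = u ((⟨0, hnm⟩ : Fin m) - 1) := by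
          have : (0 : Fin m) = (⟨0, hnm⟩ : Fin m) := by
            apply Fin.ext
            simp
          rw [show xb = u ((0 : Fin m) - 1) from rfl, this]
        rw [hxb, norm_sub_rev]
        calc ‖u ⟨0, hnm⟩ - T ⟨0, hnm⟩ (u ((⟨0, hnm⟩ : Fin m) - 1))‖ ≤ εp := hc
        _ = 1 * εp := by ring
        _ ≤ ((0+1 : ℕ) : ℝ) * εp := by norm_num
      · -- inductive step
        have ihh := ih (by omega) (by omega)
        have hsub1 : ((⟨n, hnm⟩ : Fin m) - 1) = ((n-1 : ℕ) : Fin m) := by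
          apply Fin.ext
          rw [Fin.sub_def]
          simp only [Fin.val_one', Fin.val_cast_of_lt (show n - 1 < m by omega)]
          rw [Nat.mod_eq_of_lt (show (1:ℕ) < m by omega)]
          have hrw : m - 1 + n = (n - 1) + m := by omega
          rw [hrw, Nat.add_mod_right, Nat.mod_eq_of_lt (by omega)]
        have hc := hcoord ⟨n, hnm⟩
        rw [hsub1] at hc
        set Qn := ((List.ofFn T).take n).foldl (fun y f => f y) xb with hQn
        have htri : ‖T ⟨n, hnm⟩ Qn - u ((n:ℕ) : Fin m)‖ ≤
            ‖T ⟨n, hnm⟩ Qn - T ⟨n, hnm⟩ (u ((n-1 : ℕ) : Fin m))‖ +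
              ‖T ⟨n, hnm⟩ (u ((n-1 : ℕ) : Fin m)) - u ((n:ℕ) : Fin m)‖ := by
          have := dist_triangle (T ⟨n, hnm⟩ Qn) (T ⟨n, hnm⟩ (u ((n-1 : ℕ) : Fin m)))
            (u ((n:ℕ) : Fin m))
          simpa [dist_eq_norm] using this
        have hidx : ((n:ℕ) : Fin m) = (⟨n, hnm⟩ : Fin m) := by
          apply Fin.ext
          simp [Fin.val_cast_of_lt hnm]
        rw [hidx] at htri
        rw [hidx]
        calc ‖T ⟨n, hnm⟩ Qn - u ⟨n, hnm⟩‖ ≤ _ := htri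
        _ ≤ ‖Qn - u ((n-1 : ℕ) : Fin m)‖ + εp := by
            have h5 := hnei ⟨n, hnm⟩ Qn (u ((n-1 : ℕ) : Fin m))
            have h6 : ‖T ⟨n, hnm⟩ (u ((n-1 : ℕ) : Fin m)) - u ⟨n, hnm⟩‖ ≤ εp := by
              rw [norm_sub_rev]
              exact hc
            linarith only [h5, h6]
        _ ≤ n * εp + εp := by linarith only [ihh]
        _ = (n+1 : ℕ) * εp := by push_cast; ring
  have hfin : (List.ofFn T).take m = List.ofFn T := by
    have h9 := List.take_length (l := List.ofFn T)
    rw [hlen] at h9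
    exact h9
  have hm' := chain m (le_trans one_le_two hm) le_rfl
  rw [hfin] at hm'
  have hidx2 : ((m-1 : ℕ) : Fin m) = (0 : Fin m) - 1 := by
    apply Fin.ext
    rw [Fin.sub_def]
    simp only [Fin.val_one', Fin.val_cast_of_lt (show m - 1 < m by omega), Fin.val_zero]
    rw [Nat.mod_eq_of_lt (show (1:ℕ) < m by omega), Nat.add_zero,
      Nat.mod_eq_of_lt (by omega)]
  rw [hidx2] at hm'
  refine ⟨xb - compSeq m T xb, ⟨xb, rfl⟩, ?_⟩
  rw [dist_zero_left]
  have heq : ‖xb - compSeq m T xb‖ = ‖compSeq m T xb - u ((0 : Fin m) - 1)‖ := by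
    rw [norm_sub_rev]
  rw [heq]
  have hlast : (m:ℝ) * εp < ε := by
    rw [hεp, mul_div_assoc', div_lt_iff₀ (by positivity)]
    have hm0 : (0:ℝ) ≤ (m:ℝ) := Nat.cast_nonneg m
    nlinarith [mul_pos hε (show (0:ℝ) < (m:ℝ) + 2 by linarith)]
  calc ‖compSeq m T xb - u ((0 : Fin m) - 1)‖ ≤ m * εp := hm'
  _ < ε := hlast
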